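/- Let n ≥ 3 be an odd integer and let m = (n−1)/2. Then for every x ∈ ℝⁿ with x ≠ 0, the m-fold iterated Laplacian of the function v(x) = log(1/|x|) satisfies (−1)^m Δ^m (log(1/|x|)) = (n−2)! · |x|^{−(n−1)}; equivalently, (-Δ)^{(n−1)/2} log(1/|x|) = γₙ · (((n−3)/2)! / (2π^{(n+1)/2})) · |x|^{−(n−1)}, where γₙ = ((n−1)!/2)|Sⁿ| and |Sⁿ| = 2π^{(n+1)/2}/Γ((n+1)/2). -/

import Mathlib

open MeasureTheory

/-- The Euclidean Laplacian `Δ f = Σᵢ ∂²f/∂xᵢ²` of a function `f : ℝⁿ → ℝ`. -/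
noncomputable def lap {n : ℕ} (f : EuclideanSpace ℝ (Fin n) → ℝ)
    (x : EuclideanSpace ℝ (Fin n)) : ℝ :=
  ∑ i : Fin n,
    fderiv ℝ (fun y => fderiv ℝ f y (EuclideanSpace.single i 1)) x (EuclideanSpace.single i 1)

/-- The volume of the unit `n`-sphere, `|Sⁿ| = 2 π^{(n+1)/2} / Γ((n+1)/2)`. -/
noncomputable def sphereVol (n : ℕ) : ℝ :=
  2 * Real.pi ^ ((n + 1 : ℝ) / 2) / Real.Gamma ((n + 1 : ℝ) / 2)

/-- `γₙ = ((n-1)!/2) |Sⁿ|`. -/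
noncomputable def gammaN (n : ℕ) : ℝ := (Nat.factorial (n - 1) : ℝ) / 2 * sphereVol n

open Filter Topology

section Aux

lemma norm_sq_eq_sum {n : ℕ} (x : EuclideanSpace ℝ (Fin n)) : ‖x‖ ^ 2 = ∑ i, x i ^ 2 := by
  rw [EuclideanSpace.norm_eq, Real.sq_sqrt (by positivity)]
  simp [Real.norm_eq_abs, sq_abs]

lemma lap_congr {n : ℕ} {f g : EuclideanSpace ℝ (Fin n) → ℝ} {x : EuclideanSpace ℝ (Fin n)}
    (h : f =ᶠ[𝓝 x] g) : lap f x = lap g x := by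
  unfold lap
  refine Finset.sum_congr rfl fun i _ => ?_
  have h1 : (fun y => fderiv ℝ f y (EuclideanSpace.single i 1)) =ᶠ[𝓝 x]
      (fun y => fderiv ℝ g y (EuclideanSpace.single i 1)) := by
    filter_upwards [h.eventually_nhds] with y hy
    rw [Filter.EventuallyEq.fderiv_eq hy]
  rw [h1.fderiv_eq]

lemma hasFDerivAt_radial {n : ℕ} {F F' : ℝ → ℝ} {y : EuclideanSpace ℝ (Fin n)}
    (hF : HasDerivAt F (F' (‖y‖ ^ 2)) (‖y‖ ^ 2)) :
    HasFDerivAt (fun z : EuclideanSpace ℝ (Fin n) => F (‖z‖ ^ 2))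
      (F' (‖y‖ ^ 2) • (2 • (innerSL ℝ y))) y := by
  have hq : HasFDerivAt (fun z : EuclideanSpace ℝ (Fin n) => ‖z‖ ^ 2) (2 • innerSL ℝ y) y := by
    simpa using (hasFDerivAt_id y).norm_sq
  exact hF.comp_hasFDerivAt y hq

lemma lap_radial {n : ℕ} (F F' F'' : ℝ → ℝ)
    (hF : ∀ s : ℝ, 0 < s → HasDerivAt F (F' s) s)
    (hF' : ∀ s : ℝ, 0 < s → HasDerivAt F' (F'' s) s)
    (x : EuclideanSpace ℝ (Fin n)) (hx : x ≠ 0) :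
    lap (fun y => F (‖y‖ ^ 2)) x
      = 4 * ‖x‖ ^ 2 * F'' (‖x‖ ^ 2) + 2 * n * F' (‖x‖ ^ 2) := by
  have hxn : ‖x‖ ≠ 0 := norm_ne_zero_iff.mpr hx
  have hxs : 0 < ‖x‖ ^ 2 := by positivity
  have key : ∀ i : Fin n,
      fderiv ℝ (fun y => fderiv ℝ (fun z : EuclideanSpace ℝ (Fin n) => F (‖z‖ ^ 2)) y
          (EuclideanSpace.single i 1)) x (EuclideanSpace.single i 1)
        = 4 * F'' (‖x‖ ^ 2) * (x i) ^ 2 + 2 * F' (‖x‖ ^ 2) := by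
    intro i
    have hev : (fun y => fderiv ℝ (fun z : EuclideanSpace ℝ (Fin n) => F (‖z‖ ^ 2)) y
          (EuclideanSpace.single i 1)) =ᶠ[𝓝 x]
        (fun y => F' (‖y‖ ^ 2) * (2 * y i)) := by
      filter_upwards [eventually_ne_nhds hx] with y hy
      have hys : 0 < ‖y‖ ^ 2 := by
        have : ‖y‖ ≠ 0 := norm_ne_zero_iff.mpr hy
        positivity
      rw [(hasFDerivAt_radial (hF _ hys)).fderiv]
      simp [EuclideanSpace.inner_single_right]
    rw [hev.fderiv_eq]
    have h1 : HasFDerivAt (fun y : EuclideanSpace ℝ (Fin n) => F' (‖y‖ ^ 2))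
        (F'' (‖x‖ ^ 2) • (2 • innerSL ℝ x)) x := hasFDerivAt_radial (hF' _ hxs)
    have h2 : HasFDerivAt (fun y : EuclideanSpace ℝ (Fin n) => 2 * y i)
        (2 • innerSL ℝ (EuclideanSpace.single i (1:ℝ))) x := by
      have h := (2 • innerSL ℝ (EuclideanSpace.single i (1:ℝ))).hasFDerivAt (x := x)
      have he : ⇑(2 • innerSL ℝ (EuclideanSpace.single i (1:ℝ)))
          = fun y : EuclideanSpace ℝ (Fin n) => 2 * y i := by
        ext y; simp [EuclideanSpace.inner_single_left]
      rwa [he] at h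
    have hmul := h1.mul h2
    rw [show (fun y : EuclideanSpace ℝ (Fin n) => F' (‖y‖ ^ 2) * (2 * y i)) = ((fun y => F' (‖y‖ ^ 2)) * fun y => 2 * y i) from rfl, hmul.fderiv]
    simp [EuclideanSpace.inner_single_right, EuclideanSpace.inner_single_left]
    ring
  unfold lap
  rw [Finset.sum_congr rfl fun i _ => key i]
  rw [Finset.sum_add_distrib]
  simp [← Finset.mul_sum, ← norm_sq_eq_sum, Finset.sum_const]
  ring

lemma lap_log {n : ℕ} (x : EuclideanSpace ℝ (Fin n)) (hx : x ≠ 0) :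
    lap (fun y : EuclideanSpace ℝ (Fin n) => Real.log (‖y‖ ^ 2) * (-(1:ℝ)/2)) x
      = (2 - (n:ℝ)) * (‖x‖ ^ 2)⁻¹ := by
  have hxn : ‖x‖ ≠ 0 := norm_ne_zero_iff.mpr hx
  have hxs : 0 < ‖x‖ ^ 2 := by positivity
  rw [lap_radial (fun s => Real.log s * (-(1:ℝ)/2)) (fun s => s⁻¹ * (-(1:ℝ)/2))
      (fun s => -((s^2)⁻¹) * (-(1:ℝ)/2))
      (fun s hs => (Real.hasDerivAt_log hs.ne').mul_const _)
      (fun s hs => (hasDerivAt_inv hs.ne').mul_const _) x hx]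
  field_simp
  ring

lemma lap_zpow {n : ℕ} (c : ℝ) (k : ℕ) (x : EuclideanSpace ℝ (Fin n)) (hx : x ≠ 0) :
    lap (fun y : EuclideanSpace ℝ (Fin n) => c * (‖y‖ ^ 2) ^ (-(k:ℤ))) x
      = (c * (2 * k * (2 * k + 2 - (n:ℝ)))) * (‖x‖ ^ 2) ^ (-((k:ℤ)+1)) := by
  have hxn : ‖x‖ ≠ 0 := norm_ne_zero_iff.mpr hx
  have hxs : 0 < ‖x‖ ^ 2 := by positivity
  have hF : ∀ s : ℝ, 0 < s → HasDerivAt (fun s => c * s ^ (-(k:ℤ)))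
      (c * (((-(k:ℤ):ℤ):ℝ) * s ^ (-(k:ℤ)-1))) s :=
    fun s hs => (hasDerivAt_zpow (-(k:ℤ)) s (Or.inl hs.ne')).const_mul c
  have hF' : ∀ s : ℝ, 0 < s → HasDerivAt (fun s => c * (((-(k:ℤ):ℤ):ℝ) * s ^ (-(k:ℤ)-1)))
      (c * (((-(k:ℤ):ℤ):ℝ) * ((((-(k:ℤ)-1):ℤ):ℝ) * s ^ (-(k:ℤ)-1-1)))) s := by
    intro s hs
    exact ((hasDerivAt_zpow (-(k:ℤ)-1) s (Or.inl hs.ne')).const_mul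
      (((-(k:ℤ):ℤ):ℝ))).const_mul c
  rw [lap_radial _ _ _ hF hF' x hx]
  set s := ‖x‖ ^ 2 with hsdef
  have e1 : s ^ (-(k:ℤ)-1) = (s ^ (k+1))⁻¹ := by
    have h : -(k:ℤ)-1 = -((k+1:ℕ):ℤ) := by push_cast; ring
    rw [h, zpow_neg, zpow_natCast]
  have e2 : s ^ (-(k:ℤ)-1-1) = (s ^ (k+2))⁻¹ := by
    have h : -(k:ℤ)-1-1 = -((k+2:ℕ):ℤ) := by push_cast; ring
    rw [h, zpow_neg, zpow_natCast]
  have e3 : s ^ (-((k:ℤ)+1)) = (s ^ (k+1))⁻¹ := by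
    have h : -((k:ℤ)+1) = -((k+1:ℕ):ℤ) := by push_cast; ring
    rw [h, zpow_neg, zpow_natCast]
  rw [e1, e2, e3]
  have hs0 : s ≠ 0 := hxs.ne'
  field_simp
  push_cast
  ring

noncomputable def cc (n : ℕ) : ℕ → ℝ
  | 0 => 1
  | 1 => 2 - (n:ℝ)
  | (k+2) => cc n (k+1) * (2*((k:ℝ)+1) * (2*((k:ℝ)+1)+2 - (n:ℝ)))

lemma cc_succ (n : ℕ) (k : ℕ) (hk : 1 ≤ k) :
    cc n (k+1) = cc n k * (2*(k:ℝ) * (2*(k:ℝ)+2 - (n:ℝ))) := by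
  match k, hk with
  | (j+1), _ => show cc n (j+2) = _; rw [cc]; push_cast; ring_nf

lemma iter_eq {n : ℕ} (k : ℕ) (hk : 1 ≤ k) :
    ∀ x : EuclideanSpace ℝ (Fin n), x ≠ 0 →
      lap^[k] (fun y : EuclideanSpace ℝ (Fin n) => Real.log (1/‖y‖)) x
        = cc n k * (‖x‖ ^ 2) ^ (-(k:ℤ)) := by
  have hu0 : (fun y : EuclideanSpace ℝ (Fin n) => Real.log (1/‖y‖))
      = fun y => Real.log (‖y‖ ^ 2) * (-(1:ℝ)/2) := by
    funext y
    rw [one_div, Real.log_inv, Real.log_pow]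
    push_cast; ring
  induction k, hk using Nat.le_induction with
  | base =>
    intro x hx
    rw [Function.iterate_one, hu0, lap_log x hx]
    show _ = cc n 1 * _
    rw [cc]
    norm_num
  | succ k hk ih =>
    intro x hx
    rw [Function.iterate_succ_apply']
    have hev : (lap^[k] (fun y : EuclideanSpace ℝ (Fin n) => Real.log (1/‖y‖))) =ᶠ[𝓝 x]
        (fun y => cc n k * (‖y‖ ^ 2) ^ (-(k:ℤ))) := by
      filter_upwards [eventually_ne_nhds hx] with y hy
      exact ih y hy
    rw [lap_congr hev, lap_zpow _ k x hx, cc_succ n k hk]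
    have : -((k:ℤ)+1) = -(((k+1:ℕ)):ℤ) := by push_cast; ring
    rw [this]

lemma cc_closed (m : ℕ) (hm : 1 ≤ m) : ∀ k, 1 ≤ k → k ≤ m →
    (-1:ℝ)^k * cc (2*m+1) k * ((Nat.factorial (2*m-2*k) : ℝ) * (Nat.factorial (m-1) : ℝ))
      = (Nat.factorial (2*m-1) : ℝ) * (Nat.factorial (k-1) : ℝ) * (Nat.factorial (m-k) : ℝ) := by
  intro k hk
  induction k, hk using Nat.le_induction with
  | base =>
    intro _
    obtain ⟨j, rfl⟩ : ∃ j, m = j + 1 := ⟨m-1, by omega⟩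
    have e1 : 2*(j+1) - 2*1 = 2*j := by omega
    have e2 : (j+1) - 1 = j := by omega
    have e3 : 2*(j+1) - 1 = 2*j+1 := by omega
    rw [e1, e2, e3]
    have hc : cc (2*(j+1)+1) 1 = 2 - ((2*(j+1)+1 : ℕ):ℝ) := rfl
    have hfac : (Nat.factorial (2*j+1) : ℝ) = (2*j+1) * Nat.factorial (2*j) := by
      rw [Nat.factorial_succ]; push_cast; ring
    rw [hc, hfac]
    norm_num [Nat.factorial]
    push_cast
    ring
  | succ k hk2 ih =>
    intro hk1m
    have hkm : k ≤ m := by omega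
    have IH := ih hkm
    obtain ⟨j, hj⟩ : ∃ j, m = k + j + 1 := ⟨m-k-1, by omega⟩
    obtain ⟨i, rfl⟩ : ∃ i, k = i + 1 := ⟨k-1, by omega⟩
    subst hj
    have e1 : 2*((i+1)+j+1) - 2*(i+1) = 2*j+2 := by omega
    have e2 : 2*((i+1)+j+1) - 2*((i+1)+1) = 2*j := by omega
    have e3 : ((i+1)+j+1) - 1 = i+j+1 := by omega
    have e4 : ((i+1)+j+1) - (i+1) = j+1 := by omega
    have e5 : ((i+1)+j+1) - ((i+1)+1) = j := by omega
    have e6 : 2*((i+1)+j+1) - 1 = 2*(i+j)+3 := by omega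
    have e7 : (i+1) - 1 = i := by omega
    have e8 : ((i+1)+1) - 1 = i+1 := by omega
    rw [e1, e3, e4, e6, e7] at IH
    rw [e2, e3, e5, e6, e8]
    rw [cc_succ _ (i+1) (by omega)]
    have hfac1 : (Nat.factorial (2*j+2) : ℝ) = ((2*j+2) * (2*j+1)) * Nat.factorial (2*j) := by
      have : 2*j+2 = (2*j+1)+1 := by omega
      rw [this, Nat.factorial_succ, Nat.factorial_succ]
      push_cast; ring
    have hfac2 : (Nat.factorial (j+1) : ℝ) = (j+1) * Nat.factorial j := by
      rw [Nat.factorial_succ]; push_cast; ring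
    have hfac3 : (Nat.factorial (i+1) : ℝ) = (i+1) * Nat.factorial i := by
      rw [Nat.factorial_succ]; push_cast; ring
    rw [hfac1, hfac2] at IH
    rw [hfac3]
    push_cast at IH ⊢
    have hj1 : ((j:ℝ)+1) ≠ 0 := by positivity
    apply mul_left_cancel₀ hj1
    linear_combination ((i:ℝ)+1) * IH

end Aux

theorem iterated_laplacian_of_log
    (n : ℕ) (hn : 3 ≤ n) (hodd : Odd n) (m : ℕ) (hm : m = (n - 1) / 2) :
    ∀ x : EuclideanSpace ℝ (Fin n), x ≠ 0 →
      (-1 : ℝ) ^ m * (lap^[m] (fun y : EuclideanSpace ℝ (Fin n) => Real.log (1 / ‖y‖))) x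
          = (Nat.factorial (n - 2) : ℝ) * (‖x‖ ^ (n - 1))⁻¹ ∧
      (-1 : ℝ) ^ m * (lap^[m] (fun y : EuclideanSpace ℝ (Fin n) => Real.log (1 / ‖y‖))) x
          = gammaN n * ((Nat.factorial ((n - 3) / 2) : ℝ) / (2 * Real.pi ^ ((n + 1 : ℝ) / 2)))
              * (‖x‖ ^ (n - 1))⁻¹ := by
  intro x hx
  obtain ⟨j, rfl⟩ : ∃ j, n = 2*j + 3 := by
    obtain ⟨t, ht⟩ := hodd
    exact ⟨t-1, by omega⟩
  have hmj : m = j + 1 := by omega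
  subst hmj
  have hxn : ‖x‖ ≠ 0 := norm_ne_zero_iff.mpr hx
  -- value of the iterated laplacian
  have key := iter_eq (n := 2*j+3) (j+1) (by omega) x hx
  -- closed form of the constant
  have closed := cc_closed (j+1) (by omega) (j+1) (by omega) le_rfl
  have e1 : 2*(j+1) - 2*(j+1) = 0 := by omega
  have e2 : (j+1) - 1 = j := by omega
  have e3 : 2*(j+1) - 1 = 2*j+1 := by omega
  have e4 : (j+1) - (j+1) = 0 := by omega
  have e5 : 2*(j+1)+1 = 2*j+3 := by omega
  rw [e1, e2, e3, e4, e5, Nat.factorial_zero] at closed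
  have hfj : (Nat.factorial j : ℝ) ≠ 0 := by
    exact_mod_cast Nat.factorial_ne_zero j
  have hA : (-1:ℝ)^(j+1) * cc (2*j+3) (j+1) = (Nat.factorial (2*j+1) : ℝ) := by
    have h := closed
    push_cast at h
    apply mul_right_cancel₀ hfj
    linear_combination h
  -- power identity
  have hpow : ((‖x‖ ^ 2 : ℝ)) ^ (-((j+1:ℕ):ℤ)) = (‖x‖ ^ (2*j+2))⁻¹ := by
    rw [zpow_neg, zpow_natCast, ← pow_mul]
    congr 1
  have efirst : (-1 : ℝ) ^ (j+1)
      * (lap^[j+1] (fun y : EuclideanSpace ℝ (Fin (2*j+3)) => Real.log (1 / ‖y‖))) x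
      = (Nat.factorial (2*j+1) : ℝ) * (‖x‖ ^ (2*j+2))⁻¹ := by
    rw [key, hpow, ← mul_assoc, hA]
  have en1 : 2*j+3 - 1 = 2*j+2 := by omega
  have en2 : 2*j+3 - 2 = 2*j+1 := by omega
  have en3 : (2*j+3 - 3)/2 = j := by omega
  constructor
  · rw [en2, en1]
    exact efirst
  · rw [en1, en3]
    have hconst : gammaN (2*j+3) * ((Nat.factorial j : ℝ)
        / (2 * Real.pi ^ (((2*j+3 : ℕ) + 1 : ℝ) / 2)))
        = (Nat.factorial (2*j+1) : ℝ) := by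
      have hp2 : (((2*j+3:ℕ):ℝ) + 1)/2 = ((j+1:ℕ):ℝ) + 1 := by push_cast; ring
      rw [gammaN, sphereVol, en1, hp2, Real.Gamma_nat_eq_factorial]
      have hq : (0:ℝ) < Real.pi ^ (((j+1:ℕ):ℝ) + 1) :=
        Real.rpow_pos_of_pos Real.pi_pos _
      have hfac1 : (Nat.factorial (2*j+2) : ℝ) = (2*j+2) * Nat.factorial (2*j+1) := by
        rw [Nat.factorial_succ]; push_cast; ring
      have hfac2 : (Nat.factorial (j+1) : ℝ) = (j+1) * Nat.factorial j := by
        rw [Nat.factorial_succ]; push_cast; ring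
      rw [hfac1, hfac2]
      have hfj1 : ((j:ℝ)+1) ≠ 0 := by positivity
      field_simp
    rw [hconst]
    exact efirst
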